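/- Let L_{-1} : ℤ[x^{±1}, q^{±1}] → ℤ[q^{±1}] be the ℤ[q^{±1}]-linear map sending x^a to q^{a²} for each integer a. Then for every nonnegative integer k, L_{-1}((x;q)_{k+1} · (x^{-1};q)_{k+1}) = 2·(q^{k+1};q)_{k+1}, where (y;q)_{k+1} = ∏_{i=0}^{k}(1 - y q^i). -/

import Mathlib

open LaurentPolynomial Finset

/-- The ring `ℤ[q^{±1}]` of Laurent polynomials in `q`. -/
noncomputable abbrev Rq := LaurentPolynomial ℤ

/-- The `ℤ[q^{±1}]`-linear "Laplace transform" on `ℤ[x^{±1}, q^{±1}]`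
(modeled as Laurent polynomials in `x` over `ℤ[q^{±1}]`), sending the monomial
`x^a` to `g a ∈ ℤ[q^{±1}]`. -/
noncomputable def Lap (g : ℤ → Rq) (f : LaurentPolynomial Rq) : Rq :=
  Finsupp.sum f.coeff fun a c => c * g a

lemma lap_add (g : ℤ → Rq) (f1 f2 : LaurentPolynomial Rq) :
    Lap g (f1 + f2) = Lap g f1 + Lap g f2 :=
  Finsupp.sum_add_index' (fun a => zero_mul (g a)) (fun a c1 c2 => add_mul c1 c2 (g a))

lemma lap_zero (g : ℤ → Rq) : Lap g 0 = 0 := Finsupp.sum_zero_index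

lemma lap_neg (g : ℤ → Rq) (f : LaurentPolynomial Rq) : Lap g (-f) = - Lap g f := by
  have h := lap_add g f (-f)
  rw [add_neg_cancel, lap_zero] at h
  exact (neg_eq_of_add_eq_zero_right h.symm).symm

lemma lap_sub (g : ℤ → Rq) (f1 f2 : LaurentPolynomial Rq) :
    Lap g (f1 - f2) = Lap g f1 - Lap g f2 := by
  rw [sub_eq_add_neg, lap_add, lap_neg, sub_eq_add_neg]

lemma lap_single (g : ℤ → Rq) (a : ℤ) (c : Rq) :
    Lap g (AddMonoidAlgebra.single a c) = c * g a := by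
  rw [Lap, AddMonoidAlgebra.coeff_single]; exact Finsupp.sum_single_index (zero_mul (g a))

lemma lap_CT (g : ℤ → Rq) (r : Rq) (n : ℤ) : Lap g (C r * T n) = r * g n := by
  rw [← single_eq_C_mul_T]; exact lap_single g n r

lemma lap_one (g : ℤ → Rq) : Lap g 1 = g 0 := by
  have := lap_CT g 1 0
  simpa using this

lemma lap_T (g : ℤ → Rq) (n : ℤ) : Lap g (T n) = g n := by
  have := lap_CT g 1 n
  simpa using this

lemma lap_C (g : ℤ → Rq) (r : Rq) : Lap g (C r) = r * g 0 := by
  have := lap_CT g r 0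
  simpa using this

lemma lap_CT_mul (g : ℤ → Rq) (r : Rq) (n : ℤ) (f : LaurentPolynomial Rq) :
    Lap g (C r * T n * f) = r * Lap (fun a => g (n + a)) f := by
  induction f using LaurentPolynomial.induction_on' with
  | add p q hp hq => rw [mul_add, lap_add, lap_add, hp, hq, mul_add]
  | C_mul_T k a =>
      have : C r * T n * (C a * T k) = C (r * a) * T (n + k) := by
        rw [T_add, map_mul]; ring
      rw [this, lap_CT, lap_CT]; ring

lemma lap_T_mul (g : ℤ → Rq) (n : ℤ) (f : LaurentPolynomial Rq) :
    Lap g (T n * f) = Lap (fun a => g (n + a)) f := by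
  have := lap_CT_mul g 1 n f
  simpa using this

lemma lap_C_mul (g : ℤ → Rq) (r : Rq) (f : LaurentPolynomial Rq) :
    Lap g (C r * f) = r * Lap g f := by
  have := lap_CT_mul g r 0 f
  simpa using this

lemma lap_const_mul (r : Rq) (h : ℤ → Rq) (f : LaurentPolynomial Rq) :
    Lap (fun a => r * h a) f = r * Lap h f := by
  unfold Lap
  rw [Finsupp.mul_sum]
  apply Finsupp.sum_congr
  intros a _
  ring

/-- substitution x → q x -/
noncomputable def sig : LaurentPolynomial Rq →ₐ[Rq] LaurentPolynomial Rq :=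
  AddMonoidAlgebra.lift Rq _ ℤ
    { toFun := fun a => C (T a.toAdd) * T a.toAdd
      map_one' := by simp
      map_mul' := by
        intro a b
        show C (T (a.toAdd + b.toAdd)) * T (a.toAdd + b.toAdd) = _
        rw [T_add, T_add, map_mul]
        ring }

lemma sig_single (a : ℤ) (c : Rq) : sig (AddMonoidAlgebra.single a c) = C (c * T a) * T a := by
  rw [sig, AddMonoidAlgebra.lift_single]
  show c • (C (T a) * T a) = _
  rw [Algebra.smul_def]
  show C c * _ = _
  rw [map_mul]; ring

lemma sig_CT (r : Rq) (n : ℤ) : sig (C r * T n) = C (r * T n) * T n := by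
  rw [← single_eq_C_mul_T]; exact sig_single n r

lemma lap_sig (g : ℤ → Rq) (f : LaurentPolynomial Rq) :
    Lap g (sig f) = Lap (fun a => T a * g a) f := by
  induction f using LaurentPolynomial.induction_on' with
  | add p q hp hq => rw [map_add, lap_add, lap_add, hp, hq]
  | C_mul_T k a => rw [sig_CT, lap_CT, lap_CT]; ring

lemma lap_invert (g : ℤ → Rq) (f : LaurentPolynomial Rq) :
    Lap g (invert f) = Lap (fun a => g (-a)) f := by
  induction f using LaurentPolynomial.induction_on' with
  | add p q hp hq => rw [map_add, lap_add, lap_add, hp, hq]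
  | C_mul_T k a =>
      rw [show (invert (C a * T k) : LaurentPolynomial Rq) = C a * T (-k) by
        rw [map_mul, invert_T, invert_C], lap_CT, lap_CT]

noncomputable def Rk (m : ℕ) : LaurentPolynomial Rq :=
  (∏ i ∈ Finset.range (m + 1), (1 - T 1 * C (T (i : ℤ)))) *
    ∏ i ∈ Finset.range (m + 1), (1 - T (-1) * C (T ((i : ℤ) + 1)))

lemma TTinv : (T 1 : LaurentPolynomial Rq) * T (-1) = 1 := by
  rw [← T_add]; norm_num

lemma TTinvR : (T 1 : Rq) * T (-1) = 1 := by
  rw [← T_add]; norm_num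

lemma sig_factor1 (i : ℤ) :
    sig (1 - T 1 * C (T i)) = 1 - T 1 * C (T (i + 1)) := by
  rw [map_sub, map_one]
  rw [show (T 1 * C (T i) : LaurentPolynomial Rq) = C (T i) * T 1 by ring, sig_CT]
  rw [← T_add]
  ring

lemma sig_factor2 (i : ℤ) :
    sig (1 - T (-1) * C (T (i + 1))) = 1 - T (-1) * C (T i) := by
  rw [map_sub, map_one]
  rw [show (T (-1) * C (T (i + 1)) : LaurentPolynomial Rq) = C (T (i + 1)) * T (-1) by ring, sig_CT]
  rw [show (T (i+1) * T (-1) : Rq) = T i by rw [← T_add]; congr 1; ring]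
  ring

lemma sig_Rk (m : ℕ) :
    sig (Rk m) = (∏ i ∈ Finset.range (m + 1), (1 - T 1 * C (T ((i : ℤ) + 1)))) *
      ∏ i ∈ Finset.range (m + 1), (1 - T (-1) * C (T (i : ℤ))) := by
  unfold Rk
  rw [map_mul, map_prod, map_prod]
  congr 1
  · exact Finset.prod_congr rfl fun i _ => sig_factor1 _
  · exact Finset.prod_congr rfl fun i _ => sig_factor2 _

lemma inv_sig_Rk (m : ℕ) : invert (sig (Rk m)) = Rk m := by
  rw [sig_Rk, map_mul, map_prod, map_prod]
  unfold Rk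
  rw [mul_comm]
  congr 1
  · apply Finset.prod_congr rfl
    intro i _
    rw [map_sub, map_one, map_mul, invert_T, invert_C]
    norm_num
  · apply Finset.prod_congr rfl
    intro i _
    rw [map_sub, map_one, map_mul, invert_T, invert_C]

lemma one_sub_CT_ne {S : Type} [CommRing S] [Nontrivial S] (r : S) (n : ℤ) (hn : n ≠ 0) :
    (1 - C r * T n : LaurentPolynomial S) ≠ 0 := by
  intro h
  have h0 : (1 - C r * T n : LaurentPolynomial S).coeff 0 = 1 := by
    rw [← single_eq_C_mul_T, AddMonoidAlgebra.one_def, AddMonoidAlgebra.coeff_sub,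
      AddMonoidAlgebra.coeff_single, AddMonoidAlgebra.coeff_single, Finsupp.sub_apply,
      Finsupp.single_eq_same, Finsupp.single_eq_of_ne' hn, sub_zero]
  rw [h] at h0
  simp at h0

lemma two_ne : (2 : Rq) ≠ 0 := by
  intro h
  have h0 : (2 : Rq).coeff 0 = 2 := by
    rw [show (2 : Rq) = 1 + 1 from one_add_one_eq_two.symm, AddMonoidAlgebra.one_def,
      AddMonoidAlgebra.coeff_add, AddMonoidAlgebra.coeff_single, Finsupp.add_apply,
      Finsupp.single_eq_same]
    norm_num
  rw [h] at h0
  simp at h0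

lemma hA (m : ℕ) :
    ((1 : LaurentPolynomial Rq) - T 1) * (∏ i ∈ Finset.range (m + 1), (1 - T 1 * C (T ((i : ℤ) + 1)))) =
      (1 - T 1 * C (T ((m : ℤ) + 1))) * ∏ i ∈ Finset.range (m + 1), (1 - T 1 * C (T (i : ℤ))) := by
  have h1 := Finset.prod_range_succ (fun i : ℕ => (1 - T 1 * C (T (i : ℤ)) : LaurentPolynomial Rq)) (m + 1)
  have h2 := Finset.prod_range_succ' (fun i : ℕ => (1 - T 1 * C (T (i : ℤ)) : LaurentPolynomial Rq)) (m + 1)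
  push_cast at h1 h2
  rw [T_zero, map_one] at h2
  linear_combination h1 - h2

lemma hB (m : ℕ) :
    (1 - T (-1) * C (T ((m : ℤ) + 1))) * (∏ i ∈ Finset.range (m + 1), (1 - T (-1) * C (T (i : ℤ)))) =
      ((1 : LaurentPolynomial Rq) - T (-1)) * ∏ i ∈ Finset.range (m + 1), (1 - T (-1) * C (T ((i : ℤ) + 1))) := by
  have h1 := Finset.prod_range_succ (fun i : ℕ => (1 - T (-1) * C (T (i : ℤ)) : LaurentPolynomial Rq)) (m + 1)
  have h2 := Finset.prod_range_succ' (fun i : ℕ => (1 - T (-1) * C (T (i : ℤ)) : LaurentPolynomial Rq)) (m + 1)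
  push_cast at h1 h2
  rw [T_zero, map_one] at h2
  linear_combination h2 - h1

lemma FE (m : ℕ) :
    (C (T ((m : ℤ) + 1)) - T 1) * sig (Rk m) = (1 - T 1 * C (T ((m : ℤ) + 1))) * Rk m := by
  rw [sig_Rk]
  unfold Rk
  have h1 := hA m
  have h2 := hB m
  have hcore : (C (T ((m : ℤ) + 1)) - T 1) * ((1 : LaurentPolynomial Rq) - T (-1)) =
      ((1 : LaurentPolynomial Rq) - T 1) * (1 - T (-1) * C (T ((m : ℤ) + 1))) := by
    linear_combination (1 - C (T ((m : ℤ) + 1))) * TTinv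
  have hM : (((1 : LaurentPolynomial Rq) - T 1) * (1 - T (-1) * C (T ((m : ℤ) + 1))) : LaurentPolynomial Rq) ≠ 0 := by
    apply mul_ne_zero
    · have := one_sub_CT_ne (1 : Rq) 1 one_ne_zero
      simpa using this
    · have := one_sub_CT_ne (T ((m : ℤ) + 1) : Rq) (-1) (by norm_num)
      intro hz
      apply this
      rw [← hz]; ring
  apply mul_left_cancel₀ hM
  set A0 := ∏ i ∈ Finset.range (m + 1), (1 - T 1 * C (T (i : ℤ)) : LaurentPolynomial Rq) with hA0
  set A1 := ∏ i ∈ Finset.range (m + 1), (1 - T 1 * C (T ((i : ℤ) + 1)) : LaurentPolynomial Rq) with hA1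
  set B0 := ∏ i ∈ Finset.range (m + 1), (1 - T (-1) * C (T (i : ℤ)) : LaurentPolynomial Rq) with hB0
  set B1 := ∏ i ∈ Finset.range (m + 1), (1 - T (-1) * C (T ((i : ℤ) + 1)) : LaurentPolynomial Rq) with hB1
  linear_combination ((C (T ((m : ℤ) + 1)) - T 1) * (1 - T (-1) * C (T ((m : ℤ) + 1))) * B0) * h1 +
    ((C (T ((m : ℤ) + 1)) - T 1) * (1 - T 1 * C (T ((m : ℤ) + 1))) * A0) * h2 +
    ((1 - T 1 * C (T ((m : ℤ) + 1))) * A0 * B1) * hcore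

noncomputable def gc (c : ℤ) : ℤ → Rq := fun a => T (a ^ 2 + c * a)

noncomputable def u (m : ℕ) (c : ℤ) : Rq := Lap (gc c) (Rk m)

lemma u_def (m : ℕ) (c : ℤ) : Lap (gc c) (Rk m) = u m c := rfl

lemma lapT1 (c : ℤ) (f : LaurentPolynomial Rq) :
    Lap (gc c) (T 1 * f) = T (c + 1) * Lap (gc (c + 2)) f := by
  rw [lap_T_mul]
  rw [show (fun a => gc c (1 + a)) = fun a => T (c + 1) * gc (c + 2) a from
    funext fun a => by unfold gc; rw [← T_add]; congr 1; ring]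
  exact lap_const_mul _ _ _

lemma lapTm1 (c : ℤ) (f : LaurentPolynomial Rq) :
    Lap (gc c) (T (-1) * f) = T (1 - c) * Lap (gc (c - 2)) f := by
  rw [lap_T_mul]
  rw [show (fun a => gc c (-1 + a)) = fun a => T (1 - c) * gc (c - 2) a from
    funext fun a => by unfold gc; rw [← T_add]; congr 1; ring]
  exact lap_const_mul _ _ _

lemma lap_sig_g (c : ℤ) (f : LaurentPolynomial Rq) :
    Lap (gc c) (sig f) = Lap (gc (c + 1)) f := by
  rw [lap_sig]
  rw [show (fun a => T a * gc c a) = gc (c + 1) from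
    funext fun a => by unfold gc; rw [← T_add]; congr 1; ring]

lemma lap_inv_g (c : ℤ) (f : LaurentPolynomial Rq) :
    Lap (gc c) (invert f) = Lap (gc (-c)) f := by
  rw [lap_invert]
  rw [show (fun a => gc c (-a)) = gc (-c) from
    funext fun a => by unfold gc; congr 1; ring]

lemma u_symm (m : ℕ) (c : ℤ) : u m c = u m (1 - c) := by
  have : u m c = Lap (gc c) (invert (sig (Rk m))) := by rw [inv_sig_Rk]; rfl
  rw [this, lap_inv_g, lap_sig_g, show -c + 1 = 1 - c from by ring, u_def]

lemma u_rel (m : ℕ) (c : ℤ) :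
    T ((m : ℤ) + 1) * u m (c + 1) - T (c + 1) * u m (c + 3) =
      u m c - T (c + 1) * (T ((m : ℤ) + 1) * u m (c + 2)) := by
  have h := congrArg (Lap (gc c)) (FE m)
  rw [sub_mul, lap_sub, lap_C_mul, lap_sig_g, u_def, lapT1, lap_sig_g,
    show c + 2 + 1 = c + 3 from by ring, u_def,
    sub_mul, one_mul, lap_sub, u_def, mul_assoc, lapT1, lap_C_mul, u_def] at h
  exact h

lemma u2 (m : ℕ) : u m 2 = T ((m : ℤ) + 1) * u m 0 := by
  have h := u_rel m (-1)
  norm_num [T_zero] at h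
  have s1 : u m (-1) = u m 2 := by have := u_symm m (-1); norm_num at this; exact this
  have s2 : u m 1 = u m 0 := by have := u_symm m 1; norm_num at this; exact this
  apply mul_left_cancel₀ two_ne
  linear_combination -h - s1 + T ((m : ℤ) + 1) * s2

lemma u3 (m : ℕ) :
    T 1 * u m 3 = (T ((m : ℤ) + 1) - 1 + T 1 * T ((m : ℤ) + 1) ^ 2) * u m 0 := by
  have h := u_rel m 0
  norm_num at h
  have s1 : u m 1 = u m 0 := by have := u_symm m 1; norm_num at this; exact this
  have h2 := u2 m
  have hT' : (T ((m : ℤ) + 1 + 1) : Rq) = T 1 * T ((m : ℤ) + 1) := by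
    rw [← T_add]; congr 1; ring
  linear_combination -h + T ((m : ℤ) + 1) * s1 + T 1 * T ((m : ℤ) + 1) * h2 + u m 2 * hT'

lemma RkSucc (m : ℕ) :
    Rk (m + 1) = Rk m - T 1 * (C (T ((m : ℤ) + 1)) * Rk m)
      - T (-1) * (C (T ((m : ℤ) + 1 + 1)) * Rk m)
      + T 1 * (T (-1) * (C (T ((m : ℤ) + 1)) * (C (T ((m : ℤ) + 1 + 1)) * Rk m))) := by
  show _ = Rk m - _ - _ + _
  unfold Rk
  rw [Finset.prod_range_succ (fun i : ℕ => (1 - T 1 * C (T (i : ℤ)) : LaurentPolynomial Rq)),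
    Finset.prod_range_succ (fun i : ℕ => (1 - T (-1) * C (T ((i : ℤ) + 1)) : LaurentPolynomial Rq))]
  push_cast
  ring

lemma v_rec (m : ℕ) :
    u (m + 1) 0 = (1 + T ((m : ℤ) + 2)) * ((1 - T 1 * T ((m : ℤ) + 1) ^ 2) * u m 0) := by
  have h := congrArg (Lap (gc 0)) (RkSucc m)
  rw [lap_add, lap_sub, lap_sub, u_def, u_def, lapT1, lapTm1, lapT1, lapTm1,
    lap_C_mul, lap_C_mul, lap_C_mul, lap_C_mul, u_def, u_def, u_def] at h
  norm_num at h
  have hs : u m (-2) = u m 3 := by have := u_symm m (-2); norm_num at this; exact this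
  have h2 := u2 m
  have h3 := u3 m
  have e1 : (T ((m : ℤ) + 2) : Rq) = T 1 * T ((m : ℤ) + 1) := by
    rw [show (m : ℤ) + 2 = 1 + ((m : ℤ) + 1) by ring, T_add]
  have e2 : (T ((m : ℤ) + 1 + 1 + 1) : Rq) = T 1 * (T 1 * T ((m : ℤ) + 1)) := by
    rw [show (m : ℤ) + 1 + 1 + 1 = 1 + (1 + ((m : ℤ) + 1)) by ring, T_add, T_add]
  have e3 : (T ((m : ℤ) + 1 + 1 + ((m : ℤ) + 1)) : Rq) = T 1 * (T ((m : ℤ) + 1) * T ((m : ℤ) + 1)) := by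
    rw [show (m : ℤ) + 1 + 1 + ((m : ℤ) + 1) = 1 + (((m : ℤ) + 1) + ((m : ℤ) + 1)) by ring, T_add, T_add]
  have e1' : (T ((m : ℤ) + 1 + 1) : Rq) = T 1 * T ((m : ℤ) + 1) := by
    rw [show (m : ℤ) + 1 + 1 = 1 + ((m : ℤ) + 1) by ring, T_add]
  rw [e2, e3, e1'] at h
  rw [e1]
  linear_combination h - T 1 * T ((m : ℤ) + 1) * h2 - T 1 ^ 2 * T ((m : ℤ) + 1) * hs
    - T 1 * T ((m : ℤ) + 1) * h3

lemma u00 : u 0 0 = 1 - T 2 := by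
  have hR : Rk 0 = 1 - C (T 1) * T (-1) - T 1 + C (T 1) := by
    unfold Rk
    rw [Finset.prod_range_one, Finset.prod_range_one]
    push_cast
    rw [T_zero, map_one]
    linear_combination C (T 1 : Rq) * TTinv
  have h := congrArg (Lap (gc 0)) hR
  rw [lap_add, lap_sub, lap_sub, lap_one, lap_CT, lap_T, lap_C, u_def] at h
  norm_num [gc] at h
  rw [h]
  rw [show (T 1 : Rq) * T 1 = T 2 by rw [← T_add]; norm_num]

lemma lapP (m : ℕ) :
    Lap (gc 0) ((∏ i ∈ Finset.range (m + 1 + 1), (1 - T 1 * C (T (i : ℤ)))) *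
        ∏ i ∈ Finset.range (m + 1 + 1), (1 - T (-1) * C (T (i : ℤ)))) =
      2 * ((1 - T 1 * T ((m : ℤ) + 1) ^ 2) * u m 0) := by
  have hP : (∏ i ∈ Finset.range (m + 1 + 1), (1 - T 1 * C (T (i : ℤ)) : LaurentPolynomial Rq)) *
        ∏ i ∈ Finset.range (m + 1 + 1), (1 - T (-1) * C (T (i : ℤ))) =
      Rk m - T (-1) * Rk m - T 1 * (C (T ((m : ℤ) + 1)) * Rk m)
        + T (-1) * (T 1 * (C (T ((m : ℤ) + 1)) * Rk m)) := by
    rw [Finset.prod_range_succ (fun i : ℕ => (1 - T 1 * C (T (i : ℤ)) : LaurentPolynomial Rq)),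
      Finset.prod_range_succ' (fun i : ℕ => (1 - T (-1) * C (T (i : ℤ)) : LaurentPolynomial Rq))]
    push_cast
    rw [T_zero, map_one]
    unfold Rk
    ring
  have h := congrArg (Lap (gc 0)) hP
  rw [lap_add, lap_sub, lap_sub, u_def, lapTm1, u_def, lapT1, lap_C_mul, u_def,
    lapTm1, lapT1, lap_C_mul, u_def] at h
  set L := Lap (gc 0) ((∏ i ∈ Finset.range (m + 1 + 1), (1 - T 1 * C (T (i : ℤ)) : LaurentPolynomial Rq)) *
        ∏ i ∈ Finset.range (m + 1 + 1), (1 - T (-1) * C (T (i : ℤ)))) with hLdef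
  norm_num at h
  have hs : u m (-2) = u m 3 := by have := u_symm m (-2); norm_num at this; exact this
  have h2 := u2 m
  have h3 := u3 m
  have e1 : (T ((m : ℤ) + 2) : Rq) = T 1 * T ((m : ℤ) + 1) := by
    rw [show (m : ℤ) + 2 = 1 + ((m : ℤ) + 1) by ring, T_add]
  have e1' : (T ((m : ℤ) + 1 + 1) : Rq) = T 1 * T ((m : ℤ) + 1) := by
    rw [show (m : ℤ) + 1 + 1 = 1 + ((m : ℤ) + 1) by ring, T_add]
  rw [e1'] at h
  rw [h]
  linear_combination - T 1 * hs - T 1 * T ((m : ℤ) + 1) * h2 - h3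

lemma W_eq (m : ℕ) :
    (1 - T 1 * T ((m : ℤ) + 1) ^ 2) * u m 0 =
      ∏ j ∈ Finset.range (m + 1 + 1), (1 - T ((m : ℤ) + 2 + (j : ℤ))) := by
  induction m with
  | zero =>
      rw [u00, Finset.prod_range_succ, Finset.prod_range_one]
      push_cast
      rw [show (T 1 : Rq) * T 1 ^ 2 = T 3 by rw [T_pow, ← T_add]; norm_num]
      ring
  | succ m ih =>
      push_cast
      rw [v_rec m]
      rw [show (T ((m : ℤ) + 1 + 1) : Rq) = T ((m : ℤ) + 2) by
        rw [show (m : ℤ) + 1 + 1 = (m : ℤ) + 2 by ring]]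
      rw [ih]
      have hne : ((1 : Rq) - T ((m : ℤ) + 2)) ≠ 0 := by
        have := one_sub_CT_ne (1 : ℤ) ((m : ℤ) + 2) (by omega)
        simpa using this
      apply mul_left_cancel₀ hne
      have hL := Finset.prod_range_succ
        (fun j : ℕ => (1 - T ((m : ℤ) + 2 + (j : ℤ)) : Rq)) (m + 1 + 1)
      have hL2 := Finset.prod_range_succ
        (fun j : ℕ => (1 - T ((m : ℤ) + 2 + (j : ℤ)) : Rq)) (m + 1 + 1 + 1)
      have hR := Finset.prod_range_succ'
        (fun j : ℕ => (1 - T ((m : ℤ) + 2 + (j : ℤ)) : Rq)) (m + 1 + 1 + 1)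
      push_cast at hL hL2 hR
      have hC : (∏ j ∈ Finset.range (m + 1 + 1 + 1), ((1 : Rq) - T ((m : ℤ) + 2 + ((j : ℤ) + 1)))) =
          ∏ j ∈ Finset.range (m + 1 + 1 + 1), ((1 : Rq) - T ((m : ℤ) + 1 + 2 + (j : ℤ))) := by
        apply Finset.prod_congr rfl
        intro j _
        rw [show (m : ℤ) + 2 + ((j : ℤ) + 1) = (m : ℤ) + 1 + 2 + (j : ℤ) by ring]
      have e0 : (T ((m : ℤ) + 2 + 0) : Rq) = T ((m : ℤ) + 2) := by
        rw [show (m : ℤ) + 2 + 0 = (m : ℤ) + 2 by ring]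
      have e4 : (T ((m : ℤ) + 2 + ((m : ℤ) + 1 + 1)) : Rq) = T ((m : ℤ) + 2) * T ((m : ℤ) + 2) := by
        rw [show (m : ℤ) + 2 + ((m : ℤ) + 1 + 1) = ((m : ℤ) + 2) + ((m : ℤ) + 2) by ring, T_add]
      have e5 : (T ((m : ℤ) + 2 + ((m : ℤ) + 1 + 1 + 1)) : Rq) =
          T 1 * (T ((m : ℤ) + 2) * T ((m : ℤ) + 2)) := by
        rw [show (m : ℤ) + 2 + ((m : ℤ) + 1 + 1 + 1) = 1 + (((m : ℤ) + 2) + ((m : ℤ) + 2)) by ring,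
          T_add, T_add]
      rw [e4] at hL
      rw [e5] at hL2
      linear_combination hR - hL2 - (1 - T 1 * T ((m : ℤ) + 2) ^ 2) * hL
        + (1 - T ((m : ℤ) + 2 + 0)) * hC
        - (∏ j ∈ Finset.range (m + 1 + 1 + 1), ((1 : Rq) - T ((m : ℤ) + 1 + 2 + (j : ℤ)))) * e0

/-- Lemma 4.2 (first formula): `L_{-1}((x;q)_{k+1}(x^{-1};q)_{k+1}) = 2 (q^{k+1};q)_{k+1}`,
where `L_{-1}` sends `x^a ↦ q^{a²}`. Here `T 1` is `x` (resp. `q`) in the outer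
(resp. inner, via `C`) Laurent polynomial ring. -/
theorem laplace_neg_one (k : ℕ) :
    Lap (fun a => T (a ^ 2))
        ((∏ i ∈ Finset.range (k + 1), (1 - T 1 * C (T (i : ℤ)))) *
          ∏ i ∈ Finset.range (k + 1), (1 - T (-1) * C (T (i : ℤ)))) =
      2 * ∏ j ∈ Finset.range (k + 1), (1 - T ((k : ℤ) + 1 + j)) := by
  rw [show (fun a : ℤ => (T (a ^ 2) : Rq)) = gc 0 from funext fun a => by
    unfold gc; rw [show (a ^ 2 + 0 * a : ℤ) = a ^ 2 by ring]]
  cases k with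
  | zero =>
      rw [Finset.prod_range_one, Finset.prod_range_one, Finset.prod_range_one]
      push_cast
      rw [T_zero, map_one, mul_one, mul_one]
      have hE : ((1 : LaurentPolynomial Rq) - T 1) * (1 - T (-1)) = 1 + 1 - T 1 - T (-1) := by
        linear_combination TTinv
      rw [hE, lap_sub, lap_sub, lap_add, lap_one, lap_T, lap_T]
      norm_num [gc]
      ring
  | succ m =>
      rw [lapP m, W_eq m]
      have hq : (∏ j ∈ Finset.range (m + 1 + 1), ((1:Rq) - T ((m : ℤ) + 2 + (j : ℤ)))) =
          ∏ j ∈ Finset.range (m + 1 + 1), ((1:Rq) - T (((m+1 : ℕ) : ℤ) + 1 + (j : ℤ))) :=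
        Finset.prod_congr rfl fun j _ => by congr 1
      rw [hq]
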